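/- Every 2-step nilpotent Lie algebra of dimension 2p+1 over a field of characteristic 0 with characteristic sequence (2,...,2,1) (p twos) admits a basis {X_1,...,X_{2p+1}} in which the only possibly nonzero brackets are [X_1, X_{2i}] = X_{2i+1} for 1 ≤ i ≤ p and [X_{2i}, X_{2j}] = Σ_{k=1}^{p} a_{2i,2j}^{2k+1} X_{2k+1} for 1 ≤ i < j ≤ p, for some scalars a_{2i,2j}^{2k+1}. -/

import Mathlib

private lemma aux0 (p : ℕ) : 0 < 2 * p + 1 := by omega
private lemma aux1 {p n : ℕ} (h : n < p) : 2 * n + 1 < 2 * p + 1 := by omega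
private lemma aux2 {p n : ℕ} (h : n < p) : 2 * n + 2 < 2 * p + 1 := by omega

set_option maxHeartbeats 1000000 in
/-- Every (2p+1)-dimensional 2-step nilpotent Lie algebra with characteristic
sequence (2,...,2,1) (p twos; equivalently, some ad(X) has rank p) admits a basis
in which the only possibly nonzero brackets are [X₁,X_{2i}] = X_{2i+1} and
[X_{2i},X_{2j}] = Σ_k a_{2i,2j}^{2k+1} X_{2k+1}. -/
theorem stmt_6 (K : Type*) (L : Type*) [Field K] [CharZero K] [IsAlgClosed K]
    [LieRing L] [LieAlgebra K L] [Module.Finite K L]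
    (p : ℕ) (hp : 1 ≤ p)
    (h2step : ∀ x y z : L, ⁅⁅x, y⁆, z⁆ = 0)
    (hdim : Module.finrank K L = 2 * p + 1)
    (hcs : ∃ x : L, Module.finrank K (LinearMap.range ((LieAlgebra.ad K L) x)) = p) :
    ∃ (B : Module.Basis (Fin (2 * p + 1)) K L) (a : Fin p → Fin p → Fin p → K),
      (∀ i : Fin p, ⁅B ⟨0, by omega⟩, B ⟨2 * i.1 + 1, by have := i.2; omega⟩⁆
          = B ⟨2 * i.1 + 2, by have := i.2; omega⟩) ∧
      (∀ i : Fin p, ⁅B ⟨0, by omega⟩, B ⟨2 * i.1 + 2, by have := i.2; omega⟩⁆ = 0) ∧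
      (∀ i j : Fin p, ⁅B ⟨2 * i.1 + 1, by have := i.2; omega⟩,
            B ⟨2 * j.1 + 1, by have := j.2; omega⟩⁆
          = ∑ k : Fin p, a i j k • B ⟨2 * k.1 + 2, by have := k.2; omega⟩) ∧
      (∀ i : Fin p, ∀ x : L, ⁅B ⟨2 * i.1 + 2, by have := i.2; omega⟩, x⁆ = 0) := by
  classical
  obtain ⟨x, hx⟩ := hcs
  obtain ⟨f, hfeq⟩ : ∃ f : L →ₗ[K] L, f = LieAlgebra.ad K L x := ⟨_, rfl⟩
  rw [← hfeq] at hx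
  have hfapp : ∀ y : L, f y = ⁅x, y⁆ := by
    intro y; rw [hfeq]; rfl
  -- elements of the range are central
  have hcent : ∀ r ∈ LinearMap.range f, ∀ z : L, ⁅r, z⁆ = 0 := by
    rintro _ ⟨y, rfl⟩ z
    rw [hfapp]; exact h2step x y z
  have hRker : LinearMap.range f ≤ LinearMap.ker f := by
    rintro r hr
    rw [LinearMap.mem_ker, hfapp, ← lie_skew, hcent r hr x, neg_zero]
  have hfne : f ≠ 0 := by
    intro h
    rw [h, LinearMap.range_zero] at hx
    simp at hx; omega
  have hxR : x ∉ LinearMap.range f := by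
    intro hxr
    apply hfne
    ext z
    rw [hfapp]
    exact hcent x hxr z
  have hxne : x ≠ 0 := by
    intro h; exact hxR (h ▸ Submodule.zero_mem _)
  have hxker : x ∈ LinearMap.ker f := by
    rw [LinearMap.mem_ker, hfapp, lie_self]
  -- ker f = span{x} ⊔ range f
  have hinf : (K ∙ x) ⊓ LinearMap.range f = ⊥ := by
    rw [Submodule.eq_bot_iff]
    rintro z ⟨hz1, hz2⟩
    obtain ⟨c, rfl⟩ := Submodule.mem_span_singleton.mp hz1
    rcases eq_or_ne c 0 with h | h
    · rw [h, zero_smul]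
    · exact absurd (by simpa [h] using Submodule.smul_mem _ c⁻¹ hz2 :
        x ∈ LinearMap.range f) hxR
  have hkerdim : Module.finrank K (LinearMap.ker f) = p + 1 := by
    have := LinearMap.finrank_range_add_finrank_ker f
    rw [hx, hdim] at this; omega
  have hsupdim : Module.finrank K ((K ∙ x) ⊔ LinearMap.range f : Submodule K L) = p + 1 := by
    have := Submodule.finrank_sup_add_finrank_inf_eq (K ∙ x) (LinearMap.range f)
    rw [hinf, finrank_span_singleton hxne, hx] at this
    simp at this
    omega
  have hkereq : LinearMap.ker f = (K ∙ x) ⊔ LinearMap.range f := by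
    refine (Submodule.eq_of_le_of_finrank_eq ?_ ?_).symm
    · exact sup_le ((Submodule.span_singleton_le_iff_mem _ _).mpr hxker) hRker
    · rw [hsupdim, hkerdim]
  -- basis of the range
  obtain ⟨Zb⟩ : Nonempty (Module.Basis (Fin p) K (LinearMap.range f)) :=
    ⟨Module.finBasisOfFinrankEq K _ hx⟩
  obtain ⟨Zc, hZc⟩ : ∃ Zc : Fin p → L, ∀ k, Zc k = (Zb k : L) := ⟨_, fun _ => rfl⟩
  have hZmem : ∀ k, Zc k ∈ LinearMap.range f := fun k => (hZc k) ▸ (Zb k).2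
  obtain ⟨Y, hYf⟩ : ∃ Y : Fin p → L, ∀ k, f (Y k) = Zc k :=
    ⟨fun k => (hZmem k).choose, fun k => (hZmem k).choose_spec⟩
  have hZspan : Submodule.span K (Set.range Zc) = LinearMap.range f := by
    have h2 : Set.range Zc = (LinearMap.range f).subtype '' Set.range Zb := by
      rw [← Set.range_comp]
      exact congrArg Set.range (funext hZc)
    rw [h2, ← Submodule.map_span, Zb.span_eq, Submodule.map_subtype_top]
  -- the candidate basis family
  obtain ⟨Yn, hYn⟩ : ∃ g : ℕ → L, ∀ i : Fin p, g i.1 = Y i :=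
    ⟨fun m => if h : m < p then Y ⟨m, h⟩ else 0, fun i => dif_pos i.2⟩
  obtain ⟨Zn, hZn⟩ : ∃ g : ℕ → L, ∀ i : Fin p, g i.1 = Zc i :=
    ⟨fun m => if h : m < p then Zc ⟨m, h⟩ else 0, fun i => dif_pos i.2⟩
  obtain ⟨w, hwdef⟩ : ∃ w : Fin (2 * p + 1) → L, ∀ i, w i =
      if i.1 = 0 then x
      else if i.1 % 2 = 1 then Yn ((i.1 - 1) / 2)
      else Zn ((i.1 - 2) / 2) := ⟨_, fun _ => rfl⟩
  have hw0 : w ⟨0, aux0 p⟩ = x := by rw [hwdef]; simp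
  have hwY : ∀ i : Fin p, w ⟨2 * i.1 + 1, aux1 i.2⟩ = Y i := by
    intro i
    rw [hwdef]
    simp only
    rw [if_neg (by omega), if_pos (by omega)]
    have h : (2 * i.1 + 1 - 1) / 2 = i.1 := by omega
    rw [h, hYn i]
  have hwZ : ∀ i : Fin p, w ⟨2 * i.1 + 2, aux2 i.2⟩ = Zc i := by
    intro i
    rw [hwdef]
    simp only
    rw [if_neg (by omega), if_neg (by omega)]
    have h : (2 * i.1 + 2 - 2) / 2 = i.1 := by omega
    rw [h, hZn i]
  have hxw : x ∈ Set.range w := ⟨⟨0, aux0 p⟩, hw0⟩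
  have hYw : ∀ i, Y i ∈ Set.range w := fun i => ⟨⟨2 * i.1 + 1, aux1 i.2⟩, hwY i⟩
  have hZw : ∀ i, Zc i ∈ Set.range w := fun i => ⟨⟨2 * i.1 + 2, aux2 i.2⟩, hwZ i⟩
  have hRle : LinearMap.range f ≤ Submodule.span K (Set.range w) := by
    rw [← hZspan]
    refine Submodule.span_le.mpr ?_
    rintro _ ⟨k, rfl⟩
    exact Submodule.subset_span (hZw k)
  have hKle : LinearMap.ker f ≤ Submodule.span K (Set.range w) := by
    rw [hkereq]
    exact sup_le ((Submodule.span_singleton_le_iff_mem _ _).mpr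
      (Submodule.subset_span hxw)) hRle
  have htop : ⊤ ≤ Submodule.span K (Set.range w) := by
    intro v _
    have hYc : Zc = f ∘ Y := funext fun k => (hYf k).symm
    have hfv : f v ∈ Submodule.map f (Submodule.span K (Set.range Y)) := by
      rw [Submodule.map_span, ← Set.range_comp, ← hYc, hZspan]
      exact LinearMap.mem_range_self f v
    obtain ⟨u, hu, huv⟩ := hfv
    have h1 : v - u ∈ LinearMap.ker f := by
      rw [LinearMap.mem_ker, map_sub, huv, sub_self]
    have h2 : u ∈ Submodule.span K (Set.range w) :=
      Submodule.span_mono (by rintro _ ⟨k, rfl⟩; exact hYw k) hu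
    have := Submodule.add_mem _ h2 (hKle h1)
    simpa using this
  have hcard : Fintype.card (Fin (2 * p + 1)) = Module.finrank K L := by
    rw [Fintype.card_fin, hdim]
  have hEx : ∃ B : Module.Basis (Fin (2 * p + 1)) K L, ⇑B = w :=
    ⟨basisOfTopLeSpanOfCardEqFinrank w htop hcard,
      coe_basisOfTopLeSpanOfCardEqFinrank w htop hcard⟩
  obtain ⟨B, hB⟩ := hEx
  -- brackets of Y's land in the range
  have hmem : ∀ i j : Fin p, ⁅Y i, Y j⁆ ∈ LinearMap.range f := by
    intro i j
    have hk : ⁅Y i, Y j⁆ ∈ LinearMap.ker f := by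
      rw [LinearMap.mem_ker, hfapp, ← lie_skew, h2step, neg_zero]
    rw [hkereq] at hk
    obtain ⟨y, hy, r, hr, hyr⟩ := Submodule.mem_sup.mp hk
    obtain ⟨c, rfl⟩ := Submodule.mem_span_singleton.mp hy
    obtain ⟨z, hz⟩ := DFunLike.ne_iff.mp hfne
    have hbr : ∀ u : L, ⁅⁅Y i, Y j⁆, u⁆ = 0 := fun u => h2step _ _ u
    have hc0 : c • f z = 0 := by
      have := hbr z
      rw [← hyr, add_lie, smul_lie, hcent r hr z, add_zero, ← hfapp] at this
      exact this
    have : c = 0 := by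
      by_contra h
      exact hz (by simpa [h] using congrArg (c⁻¹ • ·) hc0)
    rw [← hyr, this, zero_smul, zero_add]
    exact hr
  have hEx2 : ∃ a : Fin p → Fin p → Fin p → K,
      ∀ i j, ⁅Y i, Y j⁆ = ∑ k, a i j k • Zc k := by
    refine ⟨fun i j k => Zb.repr ⟨⁅Y i, Y j⁆, hmem i j⟩ k, fun i j => ?_⟩
    have h := congrArg ((LinearMap.range f).subtype) (Zb.sum_repr ⟨⁅Y i, Y j⁆, hmem i j⟩)
    rw [map_sum] at h
    simp only [map_smul, Submodule.coe_subtype] at h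
    simp only [hZc]
    exact h.symm
  obtain ⟨a, hsum⟩ := hEx2
  clear hmem htop hcard hRle hKle hxw hYw hZw hwdef hYn hZn hZspan hkereq
    hsupdim hkerdim hinf hxker hxne hxR hfne hfeq hx hdim hZc
  have e0 : B ⟨0, aux0 p⟩ = x := (congrFun hB _).trans hw0
  have eY : ∀ i : Fin p, B ⟨2 * i.1 + 1, aux1 i.2⟩ = Y i :=
    fun i => (congrFun hB _).trans (hwY i)
  have eZ : ∀ i : Fin p, B ⟨2 * i.1 + 2, aux2 i.2⟩ = Zc i :=
    fun i => (congrFun hB _).trans (hwZ i)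
  refine ⟨B, a, fun i => ?_, fun i => ?_, fun i j => ?_, fun i v => ?_⟩
  · exact (congrArg₂ (fun u v => ⁅u, v⁆) e0 (eY i)).trans
      (((hfapp (Y i)).symm.trans (hYf i)).trans (eZ i).symm)
  · exact (congrArg₂ (fun u v => ⁅u, v⁆) e0 (eZ i)).trans
      ((hfapp (Zc i)).symm.trans (hRker (hZmem i)))
  · refine (congrArg₂ (fun u v => ⁅u, v⁆) (eY i) (eY j)).trans ((hsum i j).trans ?_)
    exact Finset.sum_congr rfl fun k _ => congrArg (fun u => a i j k • u) (eZ k).symm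
  · exact (congrArg (fun u => ⁅u, v⁆) (eZ i)).trans (hcent _ (hZmem i) v)
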